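/- Let μ, λ be real numbers with μλ ≠ 0 and such that either (−1 < μ ≤ λ ≤ 1) or (μ = −1 and −1 ≤ λ < 0). If some derivation of the filiform Lie algebra n₄ has characteristic polynomial X(X − 1)(X − μ)(X − λ), then either μ = λ ∈ {−1, 1/2, 1}, or (μ, λ) = (−1/2, 1/2). -/

import Mathlib

set_option linter.unusedTactic false
set_option linter.unnecessarySeqFocus false
set_option linter.unreachableTactic false

open Polynomial

/-- The 4-dimensional filiform Lie algebra `n₄`: the real vector space `Fin 4 → ℝ` with
basis `e₁, e₂, e₃, e₄` and only nonzero brackets `⁅e₁, e₂⁆ = e₃` and `⁅e₁, e₃⁆ = e₄`. -/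
def N4 : Type := Fin 4 → ℝ

noncomputable instance : AddCommGroup N4 := Pi.addCommGroup
noncomputable instance : Module ℝ N4 := Pi.module _ _ _
instance : FiniteDimensional ℝ N4 := inferInstanceAs (FiniteDimensional ℝ (Fin 4 → ℝ))

lemma N4.add_apply (x y : N4) (i : Fin 4) : (x + y) i = x i + y i := rfl
lemma N4.smul_apply (r : ℝ) (x : N4) (i : Fin 4) : (r • x) i = r * x i := rfl

noncomputable instance : LieRing N4 :=
  { (inferInstance : AddCommGroup N4) with
    bracket := fun x y => ![0, 0, x 0 * y 1 - x 1 * y 0, x 0 * y 2 - x 2 * y 0]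
    add_lie := by
      intro x y z
      show (![_,_,_,_] : Fin 4 → ℝ) = ![_,_,_,_] + ![_,_,_,_]
      funext i
      fin_cases i <;> simp [N4.add_apply] <;> erw [Pi.add_apply] <;> simp <;> ring
    lie_add := by
      intro x y z
      show (![_,_,_,_] : Fin 4 → ℝ) = ![_,_,_,_] + ![_,_,_,_]
      funext i
      fin_cases i <;> simp [N4.add_apply] <;> erw [Pi.add_apply] <;> simp <;> ring
    lie_self := by
      intro x
      show (![_,_,_,_] : Fin 4 → ℝ) = 0
      funext i
      fin_cases i <;> simp <;> ring
    leibniz_lie := by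
      intro x y z
      show (![_,_,_,_] : Fin 4 → ℝ) = ![_,_,_,_] + ![_,_,_,_]
      funext i
      fin_cases i <;> simp [N4.add_apply] <;> erw [Pi.add_apply] <;> simp <;> ring }

noncomputable instance : LieAlgebra ℝ N4 :=
  { lie_smul := by
      intro r x y
      show (![_,_,_,_] : Fin 4 → ℝ) = r • ![_,_,_,_]
      funext i
      fin_cases i <;> simp [N4.smul_apply] <;> erw [Pi.smul_apply] <;> simp <;> ring }

lemma N4.lie_def (x y : N4) :
    ⁅x, y⁆ = ![0, 0, x 0 * y 1 - x 1 * y 0, x 0 * y 2 - x 2 * y 0] := rfl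

-- main extraction lemma
lemma n4_exists_ab (μ lam : ℝ)
    (h : ∃ D : LieDerivation ℝ N4 N4,
      LinearMap.charpoly D.toLinearMap = X * (X - 1) * (X - C μ) * (X - C lam)) :
    ∃ a b : ℝ, ∀ x : ℝ,
      (x - a) * (x - b) * (x - (a + b)) * (x - (2 * a + b))
        = x * (x - 1) * (x - μ) * (x - lam) := by
  classical
  obtain ⟨D, hD⟩ := h
  let B : Module.Basis (Fin 4) ℝ N4 := Pi.basisFun ℝ (Fin 4)
  let e : Fin 4 → N4 := fun i => Pi.single i 1
  have he : ∀ i, B i = e i := fun i => Pi.basisFun_apply ℝ (Fin 4) i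
  -- basic values
  have hDlin : ∀ x : N4, D.toLinearMap x = D x := fun x => rfl
  -- bracket identities
  have hz : ∀ j : Fin 4, (0 : N4) j = 0 := fun _ => rfl
  have hbr1 : ⁅e 0, e 1⁆ = e 2 := by
    funext j
    rw [N4.lie_def]
    fin_cases j <;> simp [e, Pi.single_apply]
  have hbr2 : ⁅e 0, e 2⁆ = e 3 := by
    funext j
    rw [N4.lie_def]
    fin_cases j <;> simp [e, Pi.single_apply]
  have hbr3 : ⁅e 1, e 2⁆ = (0 : N4) := by
    funext j
    rw [N4.lie_def]
    fin_cases j <;> simp [e, Pi.single_apply, hz]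
  set a := D (e 0) 0 with ha
  set b := D (e 1) 1 with hb
  -- coordinates of e i
  have e00 : e 0 0 = 1 := by simp [e]
  have e01 : e 0 1 = 0 := by simp [e, Pi.single_apply]
  have e02 : e 0 2 = 0 := by simp [e, Pi.single_apply]
  have e10 : e 1 0 = 0 := by simp [e, Pi.single_apply]
  have e11 : e 1 1 = 1 := by simp [e]
  have e12 : e 1 2 = 0 := by simp [e, Pi.single_apply]
  have e20 : e 2 0 = 0 := by simp [e, Pi.single_apply]
  have e21 : e 2 1 = 0 := by simp [e, Pi.single_apply]
  have e22 : e 2 2 = 1 := by simp [e]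
  -- D (e 2)
  have hD2 : ∀ j, D (e 2) j = ⁅e 0, D (e 1)⁆ j + ⁅D (e 0), e 1⁆ j := by
    intro j; rw [← hbr1, D.apply_lie_eq_add]; rfl
  have h20 : D (e 2) 0 = 0 := by rw [hD2 0, N4.lie_def, N4.lie_def]; simp
  have h21 : D (e 2) 1 = 0 := by rw [hD2 1, N4.lie_def, N4.lie_def]; simp
  have h22 : D (e 2) 2 = a + b := by
    rw [hD2 2, N4.lie_def, N4.lie_def]
    simp [e00, e01, e10, e11]
    ring
  -- D (e 3)
  have hD3 : ∀ j, D (e 3) j = ⁅e 0, D (e 2)⁆ j + ⁅D (e 0), e 2⁆ j := by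
    intro j; rw [← hbr2, D.apply_lie_eq_add]; rfl
  have h30 : D (e 3) 0 = 0 := by rw [hD3 0, N4.lie_def, N4.lie_def]; simp
  have h31 : D (e 3) 1 = 0 := by rw [hD3 1, N4.lie_def, N4.lie_def]; simp
  have h32 : D (e 3) 2 = 0 := by
    rw [hD3 2, N4.lie_def, N4.lie_def]
    simp [e00, e01, e20, e21, h21]
  have h33 : D (e 3) 3 = 2 * a + b := by
    rw [hD3 3, N4.lie_def, N4.lie_def]
    simp [e00, e02, e20, e22, h22]
    ring
  -- D (e 1) 0 = 0
  have hzero : ∀ j, (0 : ℝ) = ⁅e 1, D (e 2)⁆ j + ⁅D (e 1), e 2⁆ j := by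
    intro j
    have h1 : D ⁅e 1, e 2⁆ = ⁅e 1, D (e 2)⁆ + ⁅D (e 1), e 2⁆ := D.apply_lie_eq_add _ _
    rw [hbr3, map_zero] at h1
    exact congrFun h1 j
  have h10 : D (e 1) 0 = 0 := by
    have h1 := hzero 3
    rw [N4.lie_def, N4.lie_def] at h1
    simp [e10, e12, e20, e22] at h1
    linarith [h1]
  -- the matrix of D
  set M : Matrix (Fin 4) (Fin 4) ℝ :=
    !![a, 0, 0, 0;
       D (e 0) 1, b, 0, 0;
       D (e 0) 2, D (e 1) 2, a + b, 0;
       D (e 0) 3, D (e 1) 3, D (e 2) 3, 2 * a + b] with hMdef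
  have hrep : ∀ (x : N4) (i : Fin 4), B.repr x i = x i :=
    fun x i => Pi.basisFun_repr ℝ (Fin 4) x i
  have hM : LinearMap.toMatrix B B D.toLinearMap = M := by
    ext i j
    rw [LinearMap.toMatrix_apply, he j, hDlin, hrep]
    fin_cases i <;> fin_cases j <;>
      simp [hMdef, h10, h20, h21, h22, h30, h31, h32, h33, ha, hb]
  have htri : M.charmatrix.BlockTriangular OrderDual.toDual := by
    intro i j hij
    fin_cases i <;> fin_cases j <;>
      first
        | exact absurd hij (by decide)
        | simp [Matrix.charmatrix_apply, hMdef, Matrix.diagonal_apply]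
  have hcp : M.charpoly = (X - C a) * (X - C b) * (X - C (a + b)) * (X - C (2 * a + b)) := by
    rw [Matrix.charpoly, Matrix.det_of_lowerTriangular _ htri, Fin.prod_univ_four]
    simp only [Matrix.charmatrix_apply_eq]
    have c0 : M 0 0 = a := rfl
    have c1 : M 1 1 = b := rfl
    have c2 : M 2 2 = a + b := rfl
    have c3 : M 3 3 = 2 * a + b := rfl
    rw [c0, c1, c2, c3]
  have key : (X - C a) * (X - C b) * (X - C (a + b)) * (X - C (2 * a + b))
      = X * (X - 1) * (X - C μ) * (X - C lam) := by
    calc (X - C a) * (X - C b) * (X - C (a + b)) * (X - C (2 * a + b))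
        = M.charpoly := hcp.symm
      _ = (LinearMap.toMatrix B B D.toLinearMap).charpoly := by rw [hM]
      _ = D.toLinearMap.charpoly := LinearMap.charpoly_toMatrix _ B
      _ = X * (X - 1) * (X - C μ) * (X - C lam) := hD
  refine ⟨a, b, fun x => ?_⟩
  have := congrArg (Polynomial.eval x) key
  simpa using this

lemma n4_alg (μ lam a b : ℝ) (hne : μ * lam ≠ 0)
    (hrange : (-1 < μ ∧ μ ≤ lam ∧ lam ≤ 1) ∨ (μ = -1 ∧ -1 ≤ lam ∧ lam < 0))
    (hev : ∀ x : ℝ, (x - a) * (x - b) * (x - (a + b)) * (x - (2 * a + b))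
      = x * (x - 1) * (x - μ) * (x - lam)) :
    (μ = lam ∧ (lam = -1 ∨ lam = 1 / 2 ∨ lam = 1)) ∨ (μ = -(1 / 2) ∧ lam = 1 / 2) := by
  obtain ⟨hμ, hlam⟩ := mul_ne_zero_iff.mp hne
  have hprod : a * (b * ((a + b) * (2 * a + b))) = 0 := by linear_combination hev 0
  rcases mul_eq_zero.mp hprod with ha | h
  · -- a = 0
    subst ha
    have h1 : (1 - b) ^ 3 = 0 := by linear_combination hev 1
    have hb : b = 1 := by
      have := (pow_eq_zero_iff three_ne_zero).mp h1; linarith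
    subst hb
    have hm : μ * (μ - 1) ^ 3 = 0 := by linear_combination hev μ
    have hμ1 : μ = 1 := by
      rcases mul_eq_zero.mp hm with h | h
      · exact absurd h hμ
      · have := (pow_eq_zero_iff three_ne_zero).mp h; linarith
    have hl : lam * (lam - 1) ^ 3 = 0 := by linear_combination hev lam
    have hlam1 : lam = 1 := by
      rcases mul_eq_zero.mp hl with h | h
      · exact absurd h hlam
      · have := (pow_eq_zero_iff three_ne_zero).mp h; linarith
    exact Or.inl ⟨by rw [hμ1, hlam1], Or.inr (Or.inr hlam1)⟩
  rcases mul_eq_zero.mp h with hb | h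
  · -- b = 0
    subst hb
    have h1 : (1 - a) ^ 2 * (1 - 2 * a) = 0 := by linear_combination hev 1
    rcases mul_eq_zero.mp h1 with h2 | h2
    · -- a = 1
      have ha : a = 1 := by
        have := (pow_eq_zero_iff two_ne_zero).mp h2; linarith
      subst ha
      have e2 : (2 - μ) * (2 - lam) = 0 := by linear_combination (-1/2 : ℝ) * hev 2
      rcases mul_eq_zero.mp e2 with h3 | h3 <;> rcases hrange with ⟨u, v, w⟩ | ⟨u, v, w⟩ <;> linarith
    · -- a = 1/2
      have ha : a = 1 / 2 := by linarith
      subst ha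
      have e2 : (2 - μ) * (2 - lam) = 9 / 4 := by linear_combination (-1/2 : ℝ) * hev 2
      have e3 : (1 + μ) * (1 + lam) = 9 / 4 := by linear_combination (-1/2 : ℝ) * hev (-1)
      have hs : μ + lam = 1 := by linear_combination (1/3 : ℝ) * e3 - (1/3 : ℝ) * e2
      have hp : μ * lam = 1 / 4 := by linear_combination e3 - hs
      have hq : (2 * μ - 1) ^ 2 = 0 := by linear_combination (4 * μ) * hs - 4 * hp
      have hμ2 : μ = 1 / 2 := by
        have := (pow_eq_zero_iff two_ne_zero).mp hq; linarith
      exact Or.inl ⟨by linarith, Or.inr (Or.inl (by linarith))⟩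
  rcases mul_eq_zero.mp h with hab | hab
  · -- a + b = 0
    have hb : b = -a := by linarith
    subst hb
    have h1 : (1 - a) ^ 2 * (1 + a) = 0 := by linear_combination hev 1
    rcases mul_eq_zero.mp h1 with h2 | h2
    · -- a = 1
      have ha : a = 1 := by
        have := (pow_eq_zero_iff two_ne_zero).mp h2; linarith
      subst ha
      have e2 : (2 - μ) * (2 - lam) = 3 := by linear_combination (-1/2 : ℝ) * hev 2
      have e3 : (3 - μ) * (3 - lam) = 8 := by linear_combination (-1/6 : ℝ) * hev 3
      have hs : μ + lam = 0 := by linear_combination e2 - e3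
      have hp : μ * lam = -1 := by linear_combination e2 + 2 * hs
      rcases hrange with ⟨u, v, w⟩ | ⟨u, v, w⟩
      · nlinarith [hs, hp, u, v, w]
      · linarith
    · -- a = -1
      have ha : a = -1 := by linarith
      subst ha
      have e2 : (2 - μ) * (2 - lam) = 9 := by linear_combination (-1/2 : ℝ) * hev 2
      have e3 : (3 - μ) * (3 - lam) = 16 := by linear_combination (-1/6 : ℝ) * hev 3
      have hs : μ + lam = -2 := by linear_combination e2 - e3
      have hp : μ * lam = 1 := by linear_combination e2 + 2 * hs
      have hq : (μ + 1) ^ 2 = 0 := by linear_combination μ * hs - hp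
      have hμ2 : μ = -1 := by
        have := (pow_eq_zero_iff two_ne_zero).mp hq; linarith
      exact Or.inl ⟨by linarith, Or.inl (by linarith)⟩
  · -- 2a + b = 0
    have hb : b = -(2 * a) := by linarith
    subst hb
    have h1 : (1 - a) * ((1 + 2 * a) * (1 + a)) = 0 := by linear_combination hev 1
    rcases mul_eq_zero.mp h1 with h2 | h2
    · -- a = 1
      have ha : a = 1 := by linarith
      subst ha
      have e2 : (2 - μ) * (2 - lam) = 12 := by linear_combination (-1/2 : ℝ) * hev 2
      have e3 : (3 - μ) * (3 - lam) = 20 := by linear_combination (-1/6 : ℝ) * hev 3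
      have hs : μ + lam = -3 := by linear_combination e2 - e3
      rcases hrange with ⟨u, v, w⟩ | ⟨u, v, w⟩ <;> linarith
    rcases mul_eq_zero.mp h2 with h3 | h3
    · -- a = -1/2
      have ha : a = -(1 / 2) := by linarith
      subst ha
      have e2 : (2 - μ) * (2 - lam) = 15 / 4 := by linear_combination (-1/2 : ℝ) * hev 2
      have e3 : (1 + μ) * (1 + lam) = 3 / 4 := by linear_combination (-1/2 : ℝ) * hev (-1)
      have hs : μ + lam = 0 := by linear_combination (1/3 : ℝ) * e3 - (1/3 : ℝ) * e2
      have hp : μ * lam = -(1 / 4) := by linear_combination e3 - hs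
      rcases hrange with ⟨u, v, w⟩ | ⟨u, v, w⟩
      · have hq : (2 * lam - 1) * (2 * lam + 1) = 0 := by
          linear_combination (4 * lam) * hs - 4 * hp
        rcases mul_eq_zero.mp hq with h4 | h4
        · exact Or.inr ⟨by linarith, by linarith⟩
        · linarith
      · linarith
    · -- a = -1
      have ha : a = -1 := by linarith
      subst ha
      have e3 : (3 - μ) * (3 - lam) = 4 := by linear_combination (-1/6 : ℝ) * hev 3
      have e4 : (2 + μ) * (2 + lam) = 4 := by linear_combination (-1/6 : ℝ) * hev (-2)
      have hs : μ + lam = 1 := by linear_combination (1/5 : ℝ) * e4 - (1/5 : ℝ) * e3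
      have hp : μ * lam = -2 := by linear_combination e4 - 2 * hs
      rcases hrange with ⟨u, v, w⟩ | ⟨u, v, w⟩
      · nlinarith [hs, hp, u, v, w]
      · linarith

/-- For `μλ ≠ 0` with either `-1 < μ ≤ λ ≤ 1` or `μ = -1 ∧ -1 ≤ λ < 0`: if some derivation
of the filiform Lie algebra `n₄` has characteristic polynomial
`X * (X - 1) * (X - μ) * (X - λ)`, then either `μ = λ ∈ {-1, 1/2, 1}` or `(μ, λ) = (-1/2, 1/2)`. -/
theorem charpoly_derivation_n4_r4_mu_lambda (μ lam : ℝ) (hne : μ * lam ≠ 0)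
    (hrange : (-1 < μ ∧ μ ≤ lam ∧ lam ≤ 1) ∨ (μ = -1 ∧ -1 ≤ lam ∧ lam < 0))
    (h : ∃ D : LieDerivation ℝ N4 N4,
      LinearMap.charpoly D.toLinearMap = X * (X - 1) * (X - C μ) * (X - C lam)) :
    (μ = lam ∧ (lam = -1 ∨ lam = 1 / 2 ∨ lam = 1)) ∨ (μ = -(1 / 2) ∧ lam = 1 / 2) := by
  obtain ⟨a, b, hev⟩ := n4_exists_ab μ lam h
  exact n4_alg μ lam a b hne hrange hev
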